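/- arXiv:1710.10727 — 6 statements merged into one kernel-verified Lean document; each statement's English description precedes it below -/
import Mathlib

section
/- In a tree with positive edge weights and additive path distance d, for leaves a and b with Φ_abc = d(a,c) − d(b,c): the value Φ_abc is the same for all c ∉ {a,b} and satisfies −d(a,b) < Φ_abc < d(a,b) if and only if a and b are distinct leaves sharing the same neighbor (siblings with a common parent). -/
open SimpleGraph

lemma leaf_uniq {V : Type*} [Fintype V] [DecidableEq V]
    {G : SimpleGraph V} [DecidableRel G.Adj] {a : V} (ha : G.degree a = 1)
    {x y : V} (hx : G.Adj a x) (hy : G.Adj a y) : x = y := by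
  have h1 : (G.neighborFinset a).card ≤ 1 := le_of_eq ha
  exact Finset.card_le_one.mp h1 x (by simpa using hx) y (by simpa using hy)

lemma leaf_not_mem {V : Type*} [Fintype V] [DecidableEq V]
    {G : SimpleGraph V} [DecidableRel G.Adj] {a : V}
    (ha : G.degree a = 1) :
    ∀ {u c : V} (p : G.Walk u c), c ≠ a → p.IsPath → u ≠ a → a ∉ p.support := by
  intro u c p
  induction p with
  | nil => intro hc _ hu; simp [Ne.symm hu]
  | @cons x y z hadj q ih =>
    intro hc hp hu
    rw [SimpleGraph.Walk.support_cons, List.mem_cons]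
    push_neg
    refine ⟨Ne.symm hu, ?_⟩
    by_cases hv : y = a
    · subst hv
      exfalso
      cases q with
      | nil => exact hc rfl
      | cons hadj2 q' =>
        have hx := leaf_uniq ha hadj.symm hadj2
        subst hx
        have hnd := hp.support_nodup
        simp [SimpleGraph.Walk.support_cons] at hnd
    · exact ih hc hp.of_cons hv

/-- For leaves `a`, `b` of a positively weighted tree, `Φ_abc = d a c - d b c`
is constant over `c ∉ {a,b}` and lies strictly between `-d a b` and `d a b`
iff `a`, `b` are distinct leaves with a common parent (siblings). -/
theorem stmt1 {V : Type*} [Fintype V] [DecidableEq V]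
    (G : SimpleGraph V) [DecidableRel G.Adj] (hT : G.IsTree)
    (hV : 3 ≤ Fintype.card V)
    (w : Sym2 V → ℝ) (hw : ∀ e ∈ G.edgeSet, 0 < w e)
    (d : V → V → ℝ)
    (hd : ∀ (a b : V) (p : G.Walk a b), p.IsPath → d a b = (p.edges.map w).sum)
    (a b : V) (ha : G.degree a = 1) (hb : G.degree b = 1) :
    ((∀ c c' : V, c ≠ a → c ≠ b → c' ≠ a → c' ≠ b →
        d a c - d b c = d a c' - d b c') ∧
      (∀ c : V, c ≠ a → c ≠ b →
        -(d a b) < d a c - d b c ∧ d a c - d b c < d a b)) ↔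
      (a ≠ b ∧ ∃ h : V, G.Adj a h ∧ G.Adj b h) := by
  have hconn := hT.isConnected.preconnected
  have hpath : ∀ x y : V, ∃ p : G.Walk x y, p.IsPath := fun x y =>
    ⟨(hconn x y).some.toPath.1, (hconn x y).some.toPath.2⟩
  have hd0 : ∀ x : V, d x x = 0 := fun x => by
    rw [hd x x Walk.nil Walk.IsPath.nil]; simp
  have hsymm : ∀ x y : V, d x y = d y x := by
    intro x y
    obtain ⟨p, hp⟩ := hpath x y
    rw [hd x y p hp, hd y x p.reverse hp.reverse,
      SimpleGraph.Walk.edges_reverse, List.map_reverse, List.sum_reverse]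
  have hpos : ∀ x y : V, x ≠ y → 0 < d x y := by
    intro x y hxy
    obtain ⟨p, hp⟩ := hpath x y
    rw [hd x y p hp]
    cases p with
    | nil => exact absurd rfl hxy
    | cons hadj q =>
      rw [SimpleGraph.Walk.edges_cons, List.map_cons, List.sum_cons]
      have h1 : 0 < w _ := hw _ (G.mem_edgeSet.mpr hadj)
      have h2 : 0 ≤ (q.edges.map w).sum := by
        apply List.sum_nonneg
        intro r hr
        obtain ⟨e, he, rfl⟩ := List.mem_map.mp hr
        exact le_of_lt (hw e (q.edges_subset_edgeSet he))
      linarith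
  have hadjd : ∀ x y : V, G.Adj x y → d x y = w s(x, y) := by
    intro x y hxy
    have hp : (Walk.cons hxy Walk.nil).IsPath := by
      simp [SimpleGraph.Walk.cons_isPath_iff, hxy.ne]
    rw [hd x y _ hp]
    simp
  have hleaf : ∀ x y c : V, G.degree x = 1 → G.Adj x y → c ≠ x →
      d x c = w s(x, y) + d y c := by
    intro x y c hx hxy hc
    obtain ⟨p, hp⟩ := hpath y c
    have hns : x ∉ p.support := leaf_not_mem hx p hc hp hxy.ne'
    have hp2 : (Walk.cons hxy p).IsPath :=
      (SimpleGraph.Walk.cons_isPath_iff hxy p).mpr ⟨hp, hns⟩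
    rw [hd x c _ hp2, SimpleGraph.Walk.edges_cons, List.map_cons,
      List.sum_cons, hd y c p hp]
  have hex : ∃ c : V, c ≠ a ∧ c ≠ b := by
    by_contra hcon
    push_neg at hcon
    have hsub : (Finset.univ : Finset V) ⊆ {a, b} := by
      intro x _
      rcases eq_or_ne x a with h | h
      · simp [h]
      · simp [hcon x h]
    have h1 := Finset.card_le_card hsub
    have h2 : ({a, b} : Finset V).card ≤ 2 :=
      (Finset.card_insert_le _ _).trans (by simp)
    rw [Finset.card_univ] at h1
    omega
  constructor
  · rintro ⟨hconst, hineq⟩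
    obtain ⟨c0, hc0a, hc0b⟩ := hex
    have hab : a ≠ b := by
      intro h
      subst h
      have h1 := hineq c0 hc0a hc0b
      have h0 := hd0 a
      linarith [h1.1, h1.2]
    obtain ⟨x, hax⟩ := (G.degree_pos_iff_exists_adj a).mp (by omega)
    obtain ⟨y, hby⟩ := (G.degree_pos_iff_exists_adj b).mp (by omega)
    have hxb : x ≠ b := by
      intro h
      rw [h] at hax
      have e1 := hleaf a b c0 ha hax hc0a
      have e2 := hleaf b a c0 hb hax.symm hc0b
      have hwpos := hw _ (G.mem_edgeSet.mpr hax)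
      have hsw : w s(b, a) = w s(a, b) := by rw [Sym2.eq_swap]
      linarith
    have hya : y ≠ a := by
      intro h
      rw [h] at hby
      have e1 := hleaf a b c0 ha hby.symm hc0a
      have e2 := hleaf b a c0 hb hby hc0b
      have hwpos := hw _ (G.mem_edgeSet.mpr hby)
      have hsw : w s(a, b) = w s(b, a) := by rw [Sym2.eq_swap]
      linarith
    have hkey := hconst x y hax.ne' hxb hya hby.ne'
    have e1 : d a x = w s(a, x) := hadjd a x hax
    have e2 : d b y = w s(b, y) := hadjd b y hby
    have e3 : d b x = w s(b, y) + d y x := hleaf b y x hb hby hxb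
    have e4 : d a y = w s(a, x) + d x y := hleaf a x y ha hax hya
    have e5 : d y x = d x y := hsymm y x
    have hxy : x = y := by
      by_contra hne
      have := hpos x y hne
      linarith
    subst hxy
    exact ⟨hab, x, hax, hby⟩
  · rintro ⟨hab, h, hAh, hBh⟩
    have wa := hw _ (G.mem_edgeSet.mpr hAh)
    have wb := hw _ (G.mem_edgeSet.mpr hBh)
    have hdab : d a b = w s(a, h) + w s(b, h) := by
      rw [hleaf a h b ha hAh hab.symm, hsymm h b, hadjd b h hBh]
    have key : ∀ c : V, c ≠ a → c ≠ b → d a c - d b c = w s(a, h) - w s(b, h) := by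
      intro c hca hcb
      rw [hleaf a h c ha hAh hca, hleaf b h c hb hBh hcb]
      ring
    refine ⟨fun c c' h1 h2 h3 h4 => by rw [key c h1 h2, key c' h3 h4],
      fun c h1 h2 => ?_⟩
    rw [key c h1 h2, hdab]
    constructor <;> linarith
end

section
/- Let H be the reduced weighted graph Laplacian of a tree T with root t, using edge weights 1/r_e (removing the row and column of t). Then for any non-root nodes a, b, the entry H⁻¹(a,b) equals the sum of r_e over all edges e lying on both the path from a to t and the path from b to t. -/
open SimpleGraph Walk

lemma tree_edge_cases {V : Type*} [DecidableEq V] {G : SimpleGraph V} (hT : G.IsTree) (t : V)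
    (P : ∀ v, G.Walk v t) (hP : ∀ v, (P v).IsPath)
    {a w : V} (h : G.Adj a w) :
    (a ∉ (P w).support ∧ (P a).edges = s(a, w) :: (P w).edges) ∨
    (a ∈ (P w).support ∧ w ∉ (P a).support ∧ (P w).edges = s(a, w) :: (P a).edges) := by
  by_cases ha : a ∈ (P w).support
  · right
    have hdrop : (P a) = (P w).dropUntil a ha :=
      (hT.existsUnique_path a t).unique (hP a) ((hP w).dropUntil ha)
    have hwn : w ∉ (P a).support := by
      rw [hdrop]
      intro hw
      have hnd : (P w).support.Nodup := (hP w).support_nodup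
      rw [← (P w).take_spec ha, Walk.support_append] at hnd
      have hw' : w ∈ ((P w).dropUntil a ha).support.tail := by
        rcases List.mem_cons.mp (((P w).dropUntil a ha).support_eq_cons ▸ hw) with h1 | h1
        · exact absurd h1 h.ne'
        · exact h1
      exact (List.disjoint_of_nodup_append hnd) ((P w).takeUntil a ha).start_mem_support hw'
    have hc : (Walk.cons h.symm (P a)).IsPath := (hP a).cons hwn
    have he := (hT.existsUnique_path w t).unique (hP w) hc
    refine ⟨ha, hwn, ?_⟩
    rw [he, Walk.edges_cons, Sym2.eq_swap]
  · left
    have hc : (Walk.cons h (P w)).IsPath := (hP w).cons ha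
    have he := (hT.existsUnique_path a t).unique (hP a) hc
    refine ⟨ha, ?_⟩
    rw [he, Walk.edges_cons]

lemma tree_sum_indicator {V : Type*} [Fintype V] [DecidableEq V] {G : SimpleGraph V}
    [DecidableRel G.Adj]
    (hT : G.IsTree) (t : V) (P : ∀ v, G.Walk v t) (hP : ∀ v, (P v).IsPath)
    {c : V} (q : G.Walk c t) (a : V) : q.IsPath →
    ∑ w ∈ G.neighborFinset a, (if a ∈ (P w).support then (-1:ℝ) else 1) *
      (if s(a, w) ∈ q.edges then (1:ℝ) else 0) =
    (if a = c then 1 else 0) - (if a = t then 1 else 0) := by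
  induction q with
  | nil => simp
  | @cons c d t' h q' ih =>
    intro hq
    rw [Walk.cons_isPath_iff] at hq
    obtain ⟨hq', hcn⟩ := hq
    have hPd : P d = q' := (hT.existsUnique_path d t').unique (hP d) hq'
    have hPc : P c = Walk.cons h q' :=
      (hT.existsUnique_path c t').unique (hP c) (hq'.cons hcn)
    have hscd : s(c, d) ∉ q'.edges := fun hx => hcn (q'.fst_mem_support_of_mem_edges hx)
    have hsplit : ∀ w : V, (if s(a, w) ∈ (Walk.cons h q').edges then (1:ℝ) else 0)
        = (if s(a, w) = s(c, d) then 1 else 0) + (if s(a, w) ∈ q'.edges then 1 else 0) := by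
      intro w
      rw [Walk.edges_cons]
      by_cases h1 : s(a, w) = s(c, d)
      · rw [if_pos h1, if_pos (List.mem_cons.mpr (Or.inl h1)), if_neg (h1 ▸ hscd)]; ring
      · by_cases h2 : s(a, w) ∈ q'.edges <;> simp [h1, h2, List.mem_cons]
    have hΔ : ∑ w ∈ G.neighborFinset a, (if a ∈ (P w).support then (-1:ℝ) else 1) *
        (if s(a, w) = s(c, d) then 1 else 0)
        = (if a = c then 1 else 0) - (if a = d then 1 else 0) := by
      by_cases hac : a = c
      · subst hac
        have hd : d ∈ G.neighborFinset a := (G.mem_neighborFinset a d).mpr h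
        have hterm : ∀ w ∈ G.neighborFinset a, w ≠ d →
            (if a ∈ (P w).support then (-1:ℝ) else 1) *
              (if s(a, w) = s(a, d) then 1 else 0) = 0 := by
          intro w _ hwd
          have hne : s(a, w) ≠ s(a, d) := by
            intro hs
            rcases Sym2.eq_iff.mp hs with ⟨_, h2⟩ | ⟨h1, _⟩
            · exact hwd h2
            · exact h.ne h1
          rw [if_neg hne, mul_zero]
        rw [Finset.sum_eq_single_of_mem d hd hterm]
        have hns : a ∉ (P d).support := by rw [hPd]; exact hcn
        rw [if_neg hns, if_pos rfl, if_pos rfl, if_neg h.ne]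
        ring
      · by_cases had : a = d
        · have hc' : c ∈ G.neighborFinset a := by
            rw [G.mem_neighborFinset]
            rw [had]; exact h.symm
          have hterm : ∀ w ∈ G.neighborFinset a, w ≠ c →
              (if a ∈ (P w).support then (-1:ℝ) else 1) *
                (if s(a, w) = s(c, d) then 1 else 0) = 0 := by
            intro w _ hwc
            have hne : s(a, w) ≠ s(c, d) := by
              intro hs
              rcases Sym2.eq_iff.mp hs with ⟨h1, _⟩ | ⟨_, h2⟩
              · exact hac h1
              · exact hwc h2
            rw [if_neg hne, mul_zero]
          rw [Finset.sum_eq_single_of_mem c hc' hterm]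
          have hmem : a ∈ (P c).support := by
            rw [hPc, Walk.support_cons]
            refine List.mem_cons.mpr (Or.inr ?_)
            rw [had]; exact q'.start_mem_support
          have hs : s(a, c) = s(c, d) := by rw [had, Sym2.eq_swap]
          rw [if_pos hmem, if_pos hs, if_neg hac, if_pos had]
          ring
        · rw [Finset.sum_eq_zero, if_neg hac, if_neg had, sub_self]
          intro w _
          have hne : s(a, w) ≠ s(c, d) := by
            intro hs
            rcases Sym2.eq_iff.mp hs with ⟨h1, _⟩ | ⟨h1, _⟩
            · exact hac h1
            · exact had h1
          rw [if_neg hne, mul_zero]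
    calc ∑ w ∈ G.neighborFinset a, (if a ∈ (P w).support then (-1:ℝ) else 1) *
          (if s(a, w) ∈ (Walk.cons h q').edges then (1:ℝ) else 0)
        = ∑ w ∈ G.neighborFinset a, ((if a ∈ (P w).support then (-1:ℝ) else 1) *
            (if s(a, w) = s(c, d) then 1 else 0) +
          (if a ∈ (P w).support then (-1:ℝ) else 1) *
            (if s(a, w) ∈ q'.edges then 1 else 0)) := by
          refine Finset.sum_congr rfl fun w _ => ?_
          rw [hsplit w, mul_add]
      _ = ((if a = c then 1 else 0) - (if a = d then 1 else 0)) +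
          ((if a = d then 1 else 0) - (if a = t' then 1 else 0)) := by
          rw [Finset.sum_add_distrib, hΔ, ih P hP hq']
      _ = (if a = c then 1 else 0) - (if a = t' then 1 else 0) := by ring

lemma insert_inter_sum {α : Type*} [DecidableEq α] (r : α → ℝ) (S T : Finset α) (e : α)
    (he : e ∉ S) :
    (∑ x ∈ insert e S ∩ T, r x) - (∑ x ∈ S ∩ T, r x) = if e ∈ T then r e else 0 := by
  by_cases h : e ∈ T
  · rw [Finset.insert_inter_of_mem h,
      Finset.sum_insert (fun hx => he (Finset.mem_inter.mp hx).1), if_pos h]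
    ring
  · rw [Finset.insert_inter_of_notMem h, if_neg h, sub_self]

lemma tree_f_diff {V : Type*} [DecidableEq V] {G : SimpleGraph V} (hT : G.IsTree) (t : V)
    (P : ∀ v, G.Walk v t) (hP : ∀ v, (P v).IsPath) (r : Sym2 V → ℝ)
    (T : Finset (Sym2 V)) {a w : V} (h : G.Adj a w) :
    (∑ e ∈ (P a).edges.toFinset ∩ T, r e) - (∑ e ∈ (P w).edges.toFinset ∩ T, r e)
    = (if a ∈ (P w).support then (-1:ℝ) else 1) *
        (if s(a, w) ∈ T then r s(a, w) else 0) := by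
  rcases tree_edge_cases hT t P hP h with ⟨hs, he⟩ | ⟨hs, hw2, he⟩
  · have hnot : s(a, w) ∉ (P w).edges.toFinset := by
      rw [List.mem_toFinset]
      exact fun hx => hs ((P w).fst_mem_support_of_mem_edges hx)
    rw [if_neg hs, one_mul]
    have : (P a).edges.toFinset = insert s(a, w) (P w).edges.toFinset := by
      rw [he, List.toFinset_cons]
    rw [this]
    exact insert_inter_sum r _ T _ hnot
  · have hnot : s(a, w) ∉ (P a).edges.toFinset := by
      rw [List.mem_toFinset]
      exact fun hx => hw2 ((P a).snd_mem_support_of_mem_edges hx)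
    rw [if_pos hs, neg_one_mul]
    have : (P w).edges.toFinset = insert s(a, w) (P a).edges.toFinset := by
      rw [he, List.toFinset_cons]
    rw [this, ← neg_sub]
    rw [insert_inter_sum r _ T _ hnot]

lemma tree_row_sum {V : Type*} [Fintype V] [DecidableEq V] {G : SimpleGraph V}
    [DecidableRel G.Adj]
    (hT : G.IsTree) (t : V) (P : ∀ v, G.Walk v t) (hP : ∀ v, (P v).IsPath)
    (r : Sym2 V → ℝ) (hr : ∀ e ∈ G.edgeSet, 0 < r e)
    (L : Matrix V V ℝ)
    (hL : ∀ a b : V, L a b =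
      if a = b then ∑ c ∈ G.neighborFinset a, (r s(a, c))⁻¹
      else if G.Adj a b then -(r s(a, b))⁻¹ else 0)
    {a : V} (hat : a ≠ t) (c : V) :
    ∑ b : V, L a b * (∑ e ∈ (P b).edges.toFinset ∩ (P c).edges.toFinset, r e)
      = if a = c then 1 else 0 := by
  set f : V → ℝ := fun b => ∑ e ∈ (P b).edges.toFinset ∩ (P c).edges.toFinset, r e with hf
  have step1 : ∑ b : V, L a b * f b
      = ∑ w ∈ G.neighborFinset a, (f a - f w) * (r s(a, w))⁻¹ := by
    rw [← Finset.add_sum_erase Finset.univ (fun b => L a b * f b) (Finset.mem_univ a)]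
    have hsub : G.neighborFinset a ⊆ Finset.univ.erase a := by
      intro w hw
      exact Finset.mem_erase.mpr
        ⟨fun hwa => G.irrefl (hwa ▸ (G.mem_neighborFinset a w).mp hw), Finset.mem_univ w⟩
    have hzero : ∀ b ∈ Finset.univ.erase a, b ∉ G.neighborFinset a → L a b * f b = 0 := by
      intro b hb hnb
      rw [hL a b, if_neg (fun hab => (Finset.mem_erase.mp hb).1 hab.symm),
        if_neg (fun hadj => hnb ((G.mem_neighborFinset a b).mpr hadj)), zero_mul]
    have h2 : ∑ b ∈ Finset.univ.erase a, L a b * f b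
        = ∑ w ∈ G.neighborFinset a, -(r s(a, w))⁻¹ * f w := by
      rw [← Finset.sum_subset hsub hzero]
      refine Finset.sum_congr rfl fun w hw => ?_
      have hadj : G.Adj a w := (G.mem_neighborFinset a w).mp hw
      rw [hL a w, if_neg (fun hab => G.irrefl (hab ▸ hadj)), if_pos hadj]
    rw [h2, hL a a, if_pos rfl, Finset.sum_mul, ← Finset.sum_add_distrib]
    refine Finset.sum_congr rfl fun w _ => ?_
    ring
  have step2 : ∀ w ∈ G.neighborFinset a, (f a - f w) * (r s(a, w))⁻¹
      = (if a ∈ (P w).support then (-1:ℝ) else 1) *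
          (if s(a, w) ∈ (P c).edges then (1:ℝ) else 0) := by
    intro w hw
    have hadj : G.Adj a w := (G.mem_neighborFinset a w).mp hw
    have hrpos : 0 < r s(a, w) := hr _ hadj
    rw [tree_f_diff hT t P hP r _ hadj, mul_assoc]
    congr 1
    by_cases hmem : s(a, w) ∈ (P c).edges
    · rw [if_pos (List.mem_toFinset.mpr hmem), if_pos hmem, mul_inv_cancel₀ hrpos.ne']
    · rw [if_neg (fun hx => hmem (List.mem_toFinset.mp hx)), if_neg hmem, zero_mul]
  rw [step1, Finset.sum_congr rfl step2,
    tree_sum_indicator hT t P hP (P c) a (hP c), if_neg hat, sub_zero]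

/-- For a tree with root `t` and the reduced weighted Laplacian `H` with edge
weights `1/r_e`, the entry `H⁻¹ a b` equals the sum of `r_e` over edges lying
on both the path from `a` to `t` and the path from `b` to `t`. -/
theorem stmt4 {V : Type*} [Fintype V] [DecidableEq V]
    (G : SimpleGraph V) [DecidableRel G.Adj] (hT : G.IsTree)
    (t : V) (r : Sym2 V → ℝ) (hr : ∀ e ∈ G.edgeSet, 0 < r e)
    (L : Matrix V V ℝ)
    (hL : ∀ a b : V, L a b =
      if a = b then ∑ c ∈ G.neighborFinset a, (r s(a, c))⁻¹
      else if G.Adj a b then -(r s(a, b))⁻¹ else 0)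
    (H : Matrix {v : V // v ≠ t} {v : V // v ≠ t} ℝ)
    (hH : ∀ a b : {v : V // v ≠ t}, H a b = L a.1 b.1) :
    ∀ (a b : {v : V // v ≠ t}) (p : G.Walk a.1 t) (q : G.Walk b.1 t),
      p.IsPath → q.IsPath →
      H⁻¹ a b = ∑ e ∈ p.edges.toFinset ∩ q.edges.toFinset, r e := by
  intro a b p q hp hq
  have hPex : ∀ v : V, ∃ pp : G.Walk v t, pp.IsPath :=
    fun v => (hT.existsUnique_path v t).exists
  choose P hP using hPex
  have huniq : ∀ (v : V) (pp : G.Walk v t), pp.IsPath → pp = P v :=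
    fun v pp hpp => ExistsUnique.unique (hT.existsUnique_path v t) hpp (hP v)
  have hPt : (P t).edges.toFinset = ∅ := by
    have hn : (Walk.nil : G.Walk t t) = P t := huniq t Walk.nil SimpleGraph.Walk.IsPath.nil
    rw [← hn]
    rfl
  set M : Matrix {v : V // v ≠ t} {v : V // v ≠ t} ℝ := fun x y =>
    ∑ e ∈ (P x.1).edges.toFinset ∩ (P y.1).edges.toFinset, r e with hM
  have hinv : H * M = 1 := by
    ext x y
    rw [Matrix.mul_apply, Matrix.one_apply]
    have hrow := tree_row_sum hT t P hP r hr L hL x.2 y.1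
    rw [← Finset.add_sum_erase Finset.univ _ (Finset.mem_univ t)] at hrow
    have hft : (∑ e ∈ (P t).edges.toFinset ∩ (P y.1).edges.toFinset, r e) = 0 := by
      rw [hPt, Finset.empty_inter, Finset.sum_empty]
    rw [hft, mul_zero, zero_add] at hrow
    have hsum : ∑ v ∈ Finset.univ.erase t,
        L x.1 v * (∑ e ∈ (P v).edges.toFinset ∩ (P y.1).edges.toFinset, r e)
        = ∑ v : {v : V // v ≠ t},
            L x.1 v.1 * (∑ e ∈ (P v.1).edges.toFinset ∩ (P y.1).edges.toFinset, r e) :=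
      Finset.sum_subtype (Finset.univ.erase t)
        (fun v => by simp [Finset.mem_erase]) _
    rw [hsum] at hrow
    have : ∑ j : {v : V // v ≠ t}, H x j * M j y
        = ∑ v : {v : V // v ≠ t},
            L x.1 v.1 * (∑ e ∈ (P v.1).edges.toFinset ∩ (P y.1).edges.toFinset, r e) :=
      Finset.sum_congr rfl fun v _ => by rw [hH, hM]
    rw [this, hrow]
    by_cases hxy : x = y
    · rw [if_pos hxy, if_pos (by rw [hxy])]
    · rw [if_neg hxy, if_neg (fun hxy1 => hxy (Subtype.ext hxy1))]
  have hHinv : H⁻¹ = M := Matrix.inv_eq_right_inv hinv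
  rw [hHinv, hM, huniq a.1 p hp, huniq b.1 q hq]
end

section
/- Combining the two previous facts: under the linearized power flow model with uncorrelated nodal injections and E[p_b²]E[q_b²] − (E[p_b q_b])² ≠ 0, the pair (H_{1/r}⁻¹(a,b), H_{1/x}⁻¹(a,b)) is the unique solution of the 2×2 linear system with moment matrix [[E[p_b²], E[p_b q_b]], [E[p_b q_b], E[q_b²]]] and right-hand side (E[v_a p_b], E[v_a q_b]); hence it is determined by second moments of observed quantities at nodes a and b only. -/
open MeasureTheory

/-- Under the linearized power flow model with uncorrelated nodal injections
and nondegenerate second-moment matrix at node `b`, the pair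
`(A a b, B a b) = (H_{1/r}⁻¹(a,b), H_{1/x}⁻¹(a,b))` is the unique solution of
the 2×2 system with moment matrix `[[E[p_b²],E[p_b q_b]],[E[p_b q_b],E[q_b²]]]`
and right-hand side `(E[v_a p_b], E[v_a q_b])`. -/
theorem stmt9 {Ω : Type*} [MeasurableSpace Ω] (μ : Measure Ω)
    [IsProbabilityMeasure μ] {n : ℕ} (hn : 1 ≤ n)
    (A B : Matrix (Fin n) (Fin n) ℝ)
    (p q : Ω → Fin n → ℝ)
    (hpp : ∀ a b : Fin n, Integrable (fun ω => p ω a * p ω b) μ)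
    (hqq : ∀ a b : Fin n, Integrable (fun ω => q ω a * q ω b) μ)
    (hpq : ∀ a b : Fin n, Integrable (fun ω => p ω a * q ω b) μ)
    (hmeanp : ∀ a : Fin n, (∫ ω, p ω a ∂μ) = 0)
    (hmeanq : ∀ a : Fin n, (∫ ω, q ω a ∂μ) = 0)
    (hcross : ∀ a b : Fin n, a ≠ b →
      (∫ ω, p ω a * p ω b ∂μ) = 0 ∧ (∫ ω, q ω a * q ω b ∂μ) = 0 ∧
      (∫ ω, p ω a * q ω b ∂μ) = 0)
    (v : Ω → Fin n → ℝ)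
    (hv : ∀ ω, v ω = A.mulVec (p ω) + B.mulVec (q ω))
    (a b : Fin n)
    (hdet : (∫ ω, p ω b ^ 2 ∂μ) * (∫ ω, q ω b ^ 2 ∂μ) -
      (∫ ω, p ω b * q ω b ∂μ) ^ 2 ≠ 0) :
    ∀ h₁ h₂ : ℝ,
      ((∫ ω, p ω b ^ 2 ∂μ) * h₁ + (∫ ω, p ω b * q ω b ∂μ) * h₂ =
          (∫ ω, v ω a * p ω b ∂μ) ∧
        (∫ ω, p ω b * q ω b ∂μ) * h₁ + (∫ ω, q ω b ^ 2 ∂μ) * h₂ =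
          (∫ ω, v ω a * q ω b ∂μ)) ↔
      (h₁ = A a b ∧ h₂ = B a b) := by

  -- abbreviations
  intro h₁ h₂
  have hqp : ∀ c d : Fin n, Integrable (fun ω => q ω c * p ω d) μ := by
    intro c d; simpa [mul_comm] using hpq d c
  -- compute E[v_a * p_b]
  have key : ∀ (w : Ω → Fin n → ℝ),
      (∀ c d : Fin n, Integrable (fun ω => p ω c * w ω d) μ) →
      (∀ c d : Fin n, Integrable (fun ω => q ω c * w ω d) μ) →
      (∫ ω, v ω a * w ω b ∂μ) =
        A a b * (∫ ω, p ω b * w ω b ∂μ) + B a b * (∫ ω, q ω b * w ω b ∂μ) +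
        (∑ c ∈ Finset.univ.erase b,
          (A a c * (∫ ω, p ω c * w ω b ∂μ) + B a c * (∫ ω, q ω c * w ω b ∂μ))) := by
    intro w hpw hqw
    have hrw : (fun ω => v ω a * w ω b) =
        (fun ω => ∑ c, (A a c * (p ω c * w ω b) + B a c * (q ω c * w ω b))) := by
      funext ω
      rw [hv ω]
      simp only [Pi.add_apply, Matrix.mulVec, dotProduct]
      rw [← Finset.sum_add_distrib, Finset.sum_mul]
      congr 1; funext c; ring
    rw [hrw, integral_finset_sum]
    · have step : ∀ c : Fin n,
          (∫ ω, (A a c * (p ω c * w ω b) + B a c * (q ω c * w ω b)) ∂μ) =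
          A a c * (∫ ω, p ω c * w ω b ∂μ) + B a c * (∫ ω, q ω c * w ω b ∂μ) := by
        intro c
        rw [integral_add ((hpw c b).const_mul _) ((hqw c b).const_mul _),
          integral_const_mul, integral_const_mul]
      rw [Finset.sum_congr rfl (fun c _ => step c),
        ← Finset.add_sum_erase _ _ (Finset.mem_univ b)]
    · intro c _
      exact ((hpw c b).const_mul _).add ((hqw c b).const_mul _)
  have hvp : (∫ ω, v ω a * p ω b ∂μ) =
      A a b * (∫ ω, p ω b ^ 2 ∂μ) + B a b * (∫ ω, p ω b * q ω b ∂μ) := by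
    have := key p hpp hqp
    rw [Finset.sum_eq_zero (fun c hc => by
      obtain ⟨h1, h2, h3⟩ := hcross c b (Finset.ne_of_mem_erase hc)
      have h4 := (hcross b c (Finset.ne_of_mem_erase hc).symm).2.2
      have : (∫ ω, q ω c * p ω b ∂μ) = 0 := by
        rw [show (fun ω => q ω c * p ω b) = fun ω => p ω b * q ω c from
          funext fun ω => mul_comm _ _]; exact h4
      rw [h1, this]; ring)] at this
    rw [this]
    have e1 : (∫ ω, p ω b * p ω b ∂μ) = ∫ ω, p ω b ^ 2 ∂μ := by
      congr 1; funext ω; ring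
    have e2 : (∫ ω, q ω b * p ω b ∂μ) = ∫ ω, p ω b * q ω b ∂μ := by
      congr 1; funext ω; ring
    rw [e1, e2]; ring
  have hvq : (∫ ω, v ω a * q ω b ∂μ) =
      A a b * (∫ ω, p ω b * q ω b ∂μ) + B a b * (∫ ω, q ω b ^ 2 ∂μ) := by
    have := key q hpq hqq
    rw [Finset.sum_eq_zero (fun c hc => by
      obtain ⟨h1, h2, h3⟩ := hcross c b (Finset.ne_of_mem_erase hc)
      rw [h2, h3]; ring)] at this
    rw [this]
    have e1 : (∫ ω, q ω b * q ω b ∂μ) = ∫ ω, q ω b ^ 2 ∂μ := by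
      congr 1; funext ω; ring
    rw [e1]; ring
  set P := ∫ ω, p ω b ^ 2 ∂μ
  set Q := ∫ ω, q ω b ^ 2 ∂μ
  set R := ∫ ω, p ω b * q ω b ∂μ
  rw [hvp, hvq]
  constructor
  · rintro ⟨e1, e2⟩
    have d1 : P * (h₁ - A a b) + R * (h₂ - B a b) = 0 := by linarith
    have d2 : R * (h₁ - A a b) + Q * (h₂ - B a b) = 0 := by linarith
    have k1 : (P * Q - R ^ 2) * (h₁ - A a b) = 0 := by linear_combination Q * d1 - R * d2
    have k2 : (P * Q - R ^ 2) * (h₂ - B a b) = 0 := by linear_combination P * d2 - R * d1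
    constructor
    · have := mul_eq_zero.mp k1
      rcases this with h | h
      · exact absurd h hdet
      · linarith
    · rcases mul_eq_zero.mp k2 with h | h
      · exact absurd h hdet
      · linarith
  · rintro ⟨rfl, rfl⟩
    constructor <;> ring
end

section
/- In a tree with positive edge weights, if a and b are leaves that are NOT siblings and neither is the parent of the other, then there exist nodes c, c' ∉ {a,b} with Φ_abc ≠ Φ_abc', where Φ_abc = d(a,c) − d(b,c). -/
open SimpleGraph

/-- Sum over a list of ≥ 3 positive values strictly exceeds the sum of two
distinct members. -/
lemma stmt12_sum_lt {V : Type*} [DecidableEq V] (w : Sym2 V → ℝ)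
    (l : List (Sym2 V)) (hpos : ∀ e ∈ l, 0 < w e)
    (e1 e2 : Sym2 V) (h1 : e1 ∈ l) (h2 : e2 ∈ l) (hne : e1 ≠ e2)
    (hlen : 3 ≤ l.length) : w e1 + w e2 < (l.map w).sum := by
  have p1 : l.Perm (e1 :: l.erase e1) := List.perm_cons_erase h1
  have h2' : e2 ∈ l.erase e1 := (List.mem_erase_of_ne (Ne.symm hne)).2 h2
  have p2 : (l.erase e1).Perm (e2 :: (l.erase e1).erase e2) :=
    List.perm_cons_erase h2'
  set r := (l.erase e1).erase e2 with hr
  have hsum : (l.map w).sum = w e1 + (w e2 + (r.map w).sum) := by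
    have := (p1.trans (List.Perm.cons e1 p2)).map w
    rw [this.sum_eq]; simp
  have hrsub : r ⊆ l := fun x hx =>
    List.erase_subset (List.erase_subset hx)
  have hrlen : r ≠ [] := by
    have h1l := l.length_erase_of_mem h1
    have h2l := (l.erase e1).length_erase_of_mem h2'
    intro hnil
    have : r.length = 0 := by rw [hnil]; rfl
    rw [hr] at this
    omega
  have hrpos : 0 < (r.map w).sum := by
    apply List.sum_pos
    · intro x hx
      obtain ⟨e, he, rfl⟩ := List.mem_map.1 hx
      exact hpos e (hrsub he)
    · simpa using hrlen
  linarith [hsum]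

/-- Helper: in a path of length ≥ 2 from `a` to `b`, the second vertex `c`
satisfies `d a c = w s(a,c)` and `d b c = S - w s(a,c)`. -/
lemma stmt12_helper {V : Type*} (G : SimpleGraph V)
    (w : Sym2 V → ℝ) (d : V → V → ℝ)
    (hd : ∀ (a b : V) (p : G.Walk a b), p.IsPath → d a b = (p.edges.map w).sum)
    {a b : V} (p : G.Walk a b) (hp : p.IsPath) (hlen : 2 ≤ p.length) :
    ∃ c : V, c ≠ a ∧ c ≠ b ∧ s(a, c) ∈ p.edges ∧
      d a c = w s(a, c) ∧ d b c = (p.edges.map w).sum - w s(a, c) := by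
  cases p with
  | nil => simp at hlen
  | @cons _ c _ h rest =>
    have hrest : rest.IsPath := hp.of_cons
    have hca : c ≠ a := h.ne'
    have hcb : c ≠ b := by
      rintro rfl
      have : rest = SimpleGraph.Walk.nil := Walk.isPath_iff_eq_nil.1 hrest
      subst this
      simp at hlen
    refine ⟨c, hca, hcb, ?_, ?_, ?_⟩
    · simp
    · have hpath : (SimpleGraph.Walk.cons h (SimpleGraph.Walk.nil)).IsPath := by
        simp [Walk.isPath_def, h.ne]
      have := hd a c _ hpath
      simpa using this
    · have hpath : rest.reverse.IsPath := hrest.reverse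
      have := hd b c _ hpath
      rw [this]
      simp [Walk.edges_reverse, List.map_reverse, List.sum_reverse]

/-- In a positively weighted tree, if distinct leaves `a`, `b` are not
adjacent and have no common neighbor, then `Φ_abc = d a c - d b c` is not
constant in `c ∉ {a,b}`. -/
theorem stmt12 {V : Type*} [Fintype V] [DecidableEq V]
    (G : SimpleGraph V) [DecidableRel G.Adj] (hT : G.IsTree)
    (hV : 4 ≤ Fintype.card V)
    (w : Sym2 V → ℝ) (hw : ∀ e ∈ G.edgeSet, 0 < w e)
    (d : V → V → ℝ)
    (hd : ∀ (a b : V) (p : G.Walk a b), p.IsPath → d a b = (p.edges.map w).sum)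
    (a b : V) (hab : a ≠ b)
    (ha : G.degree a = 1) (hb : G.degree b = 1)
    (hnadj : ¬ G.Adj a b)
    (hnsib : ∀ h : V, ¬ (G.Adj a h ∧ G.Adj b h)) :
    ∃ c c' : V, c ≠ a ∧ c ≠ b ∧ c' ≠ a ∧ c' ≠ b ∧
      d a c - d b c ≠ d a c' - d b c' := by
  obtain ⟨q⟩ := hT.isConnected.preconnected a b
  obtain ⟨p, hp⟩ : ∃ p : G.Walk a b, p.IsPath := ⟨q.toPath, q.toPath.2⟩
  -- length ≥ 3
  have hlen3 : 3 ≤ p.length := by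
    rcases p with _ | ⟨h1, rest1⟩
    · exact absurd rfl hab
    · rcases rest1 with _ | ⟨h2, rest2⟩
      · exact absurd h1 hnadj
      · rcases rest2 with _ | ⟨h3, rest3⟩
        · exact absurd ⟨h1, h2.symm⟩ (hnsib _)
        · simp [Walk.length_cons]
  have hlen2 : 2 ≤ p.length := by omega
  set S : ℝ := (p.edges.map w).sum with hS
  obtain ⟨c, hca, hcb, hce, hdac, hdbc⟩ := stmt12_helper G w d hd p hp hlen2
  have hlen2' : 2 ≤ p.reverse.length := by simpa using hlen2
  obtain ⟨c', hc'b, hc'a, hce', hdbc', hdac'⟩ :=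
    stmt12_helper G w d hd p.reverse hp.reverse hlen2'
  have hSrev : ((p.reverse.edges).map w).sum = S := by
    rw [Walk.edges_reverse, List.map_reverse, List.sum_reverse]
  rw [hSrev] at hdac'
  have hce'' : s(b, c') ∈ p.edges := by
    rw [Walk.edges_reverse, List.mem_reverse] at hce'
    exact hce'
  -- the two edges are distinct
  have hedne : s(a, c) ≠ s(b, c') := by
    intro heq
    rw [Sym2.eq_iff] at heq
    rcases heq with ⟨rfl, _⟩ | ⟨rfl, _⟩
    · exact hab rfl
    · exact hc'a rfl
  have hpos : ∀ e ∈ p.edges, 0 < w e := fun e he =>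
    hw e (Walk.edges_subset_edgeSet p he)
  have hlenedges : 3 ≤ p.edges.length := by
    rw [Walk.length_edges]; exact hlen3
  have hkey : w s(a, c) + w s(b, c') < S :=
    stmt12_sum_lt w p.edges hpos _ _ hce hce'' hedne hlenedges
  refine ⟨c, c', hca, hcb, hc'a, hc'b, ?_⟩
  rw [hdac, hdbc, hdac', hdbc']
  intro heq
  have : w s(a, c) + w s(b, c') = S := by linarith
  linarith
end

section
/- Let T and T' be two finite trees with positive edge weights whose leaf sets are both identified with a common set L, such that every internal (non-leaf) vertex of each tree has degree at least 3. If the weighted path distances agree on all pairs of leaves, d_T(a,b) = d_{T'}(a,b) for all a,b ∈ L, then T and T' are isomorphic via a weight-preserving isomorphism fixing L. -/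
open SimpleGraph Walk

set_option linter.unusedSectionVars false

namespace Stmt13Aux

variable {V : Type*} [Fintype V] [DecidableEq V] {G : SimpleGraph V} [DecidableRel G.Adj]

noncomputable def tp (hT : G.IsTree) (a b : V) : G.Walk a b :=
  (hT.existsUnique_path a b).choose

lemma tp_isPath (hT : G.IsTree) (a b : V) : (tp hT a b).IsPath :=
  (hT.existsUnique_path a b).choose_spec.1

lemma tp_unique (hT : G.IsTree) {a b : V} (p : G.Walk a b) (hp : p.IsPath) :
    p = tp hT a b :=
  (hT.existsUnique_path a b).choose_spec.2 p hp

lemma isPath_append {a b c : V} {p : G.Walk a b} {q : G.Walk b c}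
    (hp : p.IsPath) (hq : q.IsPath)
    (h : ∀ x, x ∈ p.support → x ∈ q.support → x = b) :
    (p.append q).IsPath := by
  apply IsPath.mk'
  rw [support_append, List.nodup_append]
  refine ⟨hp.support_nodup, hq.support_nodup.tail, ?_⟩
  intro x hxp y hxq hxy; subst hxy
  have hxq' : x ∈ q.support := List.mem_of_mem_tail hxq
  have hxb : x = b := h x hxp hxq'
  subst hxb
  have := hq.support_nodup
  rw [q.support_eq_cons] at this
  exact (List.nodup_cons.mp this).1 hxq

lemma isPath_concat {a b c : V} {p : G.Walk a b} (hp : p.IsPath) (h : G.Adj b c)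
    (hc : c ∉ p.support) : (p.concat h).IsPath := by
  rw [concat_eq_append]
  apply isPath_append hp (IsPath.nil.cons (by simp [h.ne]))
  intro x hxp hxq
  simp only [support_cons, support_nil, List.mem_cons, List.mem_singleton] at hxq
  rcases hxq with rfl | rfl | h'
  · rfl
  · exact absurd hxp hc
  · cases h'

section Metric

variable (hT : G.IsTree) {w : Sym2 V → ℝ} {d : V → V → ℝ}
variable (hw : ∀ e ∈ G.edgeSet, 0 < w e)
variable (hd : ∀ (a b : V) (p : G.Walk a b), p.IsPath → d a b = (p.edges.map w).sum)

include hT hw hd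

lemma dist_tp (a b : V) : d a b = ((tp hT a b).edges.map w).sum :=
  hd a b _ (tp_isPath hT a b)

lemma dist_self (a : V) : d a a = 0 := by
  have := hd a a Walk.nil IsPath.nil
  simpa using this

lemma dist_symm (a b : V) : d a b = d b a := by
  rw [dist_tp hT hw hd a b, hd b a (tp hT a b).reverse (tp_isPath hT a b).reverse,
    edges_reverse, List.map_reverse, List.sum_reverse]

lemma wsum_nonneg {a b : V} (p : G.Walk a b) : 0 ≤ (p.edges.map w).sum := by
  apply List.sum_nonneg
  intro x hx
  rcases List.mem_map.mp hx with ⟨e, he, rfl⟩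
  exact (hw e (p.edges_subset_edgeSet he)).le

lemma dist_nonneg' (a b : V) : 0 ≤ d a b := by
  rw [dist_tp hT hw hd a b]; exact wsum_nonneg hT hw hd _

lemma dist_eq_zero_iff {a b : V} : d a b = 0 ↔ a = b := by
  constructor
  · intro h0
    rw [dist_tp hT hw hd a b] at h0
    rcases heq : (tp hT a b).edges with _ | ⟨e, es⟩
    · have : (tp hT a b).length = 0 := by
        have := (tp hT a b).length_edges
        rw [heq] at this; simpa using this.symm
      exact eq_of_length_eq_zero this
    · exfalso
      have hsum : 0 < ((tp hT a b).edges.map w).sum := by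
        rw [heq]
        simp only [List.map_cons, List.sum_cons]
        have h1 : 0 < w e := hw e ((tp hT a b).edges_subset_edgeSet (by rw [heq]; simp))
        have h2 : 0 ≤ (es.map w).sum := by
          apply List.sum_nonneg
          intro x hx
          rcases List.mem_map.mp hx with ⟨e', he', rfl⟩
          exact (hw e' ((tp hT a b).edges_subset_edgeSet (by rw [heq]; simp [he']))).le
        linarith
      rw [h0] at hsum; exact lt_irrefl 0 hsum
  · rintro rfl; exact dist_self hT hw hd a

lemma dist_pos {a b : V} (h : a ≠ b) : 0 < d a b :=
  lt_of_le_of_ne (dist_nonneg' hT hw hd a b)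
    (fun h0 => h ((dist_eq_zero_iff hT hw hd).mp h0.symm))

/-- easy direction: on-path vertex is metrically between -/
lemma between_of_mem {a b c : V} (hc : c ∈ (tp hT a b).support) :
    d a c + d c b = d a b := by
  have hsp := (tp_isPath hT a b)
  have h1 : d a c = (((tp hT a b).takeUntil c hc).edges.map w).sum :=
    hd a c _ (hsp.takeUntil hc)
  have h2 : d c b = (((tp hT a b).dropUntil c hc).edges.map w).sum :=
    hd c b _ (hsp.dropUntil hc)
  have h3 := (tp hT a b).take_spec hc
  have h4 : d a b = ((((tp hT a b).takeUntil c hc).append ((tp hT a b).dropUntil c hc)).edges.map w).sum := by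
    rw [h3]; exact dist_tp hT hw hd a b
  rw [edges_append, List.map_append, List.sum_append] at h4
  rw [h1, h2, h4]

lemma takeUntil_eq_tp {a b c : V} (hc : c ∈ (tp hT a b).support) :
    (tp hT a b).takeUntil c hc = tp hT a c :=
  tp_unique hT _ ((tp_isPath hT a b).takeUntil hc)

lemma dropUntil_eq_tp {a b c : V} (hc : c ∈ (tp hT a b).support) :
    (tp hT a b).dropUntil c hc = tp hT c b :=
  tp_unique hT _ ((tp_isPath hT a b).dropUntil hc)

lemma mem_tp_symm {a b c : V} (hc : c ∈ (tp hT a b).support) :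
    c ∈ (tp hT b a).support := by
  have : (tp hT a b).reverse = tp hT b a := tp_unique hT _ (tp_isPath hT a b).reverse
  rw [← this, support_reverse, List.mem_reverse]; exact hc

/-- median existence -/
lemma exists_median (a b c : V) :
    ∃ x, x ∈ (tp hT a b).support ∧ x ∈ (tp hT a c).support ∧ x ∈ (tp hT b c).support := by
  classical
  set F : Finset V := Finset.univ.filter
    (fun x => x ∈ (tp hT a b).support ∧ x ∈ (tp hT a c).support) with hF
  have haF : a ∈ F := by simp [hF, start_mem_support]
  obtain ⟨x, hxF, hxmax⟩ := F.exists_max_image (fun y => d a y) ⟨a, haF⟩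
  simp only [hF, Finset.mem_filter] at hxF
  obtain ⟨-, hx1, hx2⟩ := hxF
  refine ⟨x, hx1, hx2, ?_⟩
  -- the two tails from x are disjoint away from x
  have hdisj : ∀ y, y ∈ (tp hT x b).support → y ∈ (tp hT x c).support → y = x := by
    intro y hyb hyc
    by_contra hyx
    have hyab : y ∈ (tp hT a b).support := by
      rw [← dropUntil_eq_tp hT hw hd hx1] at hyb
      exact (tp hT a b).support_dropUntil_subset hx1 hyb
    have hyac : y ∈ (tp hT a c).support := by
      rw [← dropUntil_eq_tp hT hw hd hx2] at hyc
      exact (tp hT a c).support_dropUntil_subset hx2 hyc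
    have hyF : y ∈ F := by simp [hF, hyab, hyac]
    have h1 : d x y + d y b = d x b := between_of_mem hT hw hd hyb
    have h2 : d a x + d x b = d a b := between_of_mem hT hw hd hx1
    have h3 : d a y + d y b = d a b := between_of_mem hT hw hd hyab
    have h4 : d a y = d a x + d x y := by linarith
    have h5 : 0 < d x y := dist_pos hT hw hd (fun h => hyx h.symm)
    have := hxmax y hyF
    linarith
  have hW : ((tp hT x b).reverse.append (tp hT x c)).IsPath := by
    apply isPath_append (tp_isPath hT x b).reverse (tp_isPath hT x c)
    intro y hy1 hy2
    rw [support_reverse, List.mem_reverse] at hy1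
    exact hdisj y hy1 hy2
  have heq : (tp hT x b).reverse.append (tp hT x c) = tp hT b c := tp_unique hT _ hW
  rw [← heq]
  rw [mem_support_append_iff]
  left
  rw [support_reverse, List.mem_reverse]
  exact start_mem_support _

lemma dist_triangle' (a b c : V) : d a b ≤ d a c + d c b := by
  obtain ⟨x, h1, h2, h3⟩ := exists_median hT hw hd a b c
  have e1 : d a x + d x b = d a b := between_of_mem hT hw hd h1
  have e2 : d a x + d x c = d a c := between_of_mem hT hw hd h2
  have e3 : d b x + d x c = d b c := between_of_mem hT hw hd h3
  have s1 : d x b = d b x := dist_symm hT hw hd x b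
  have s2 : d c b = d b c := dist_symm hT hw hd c b
  have hn : 0 ≤ d x c := dist_nonneg' hT hw hd x c
  linarith

/-- hard direction: metrically between implies on path -/
lemma mem_of_between {a b c : V} (h : d a c + d c b = d a b) :
    c ∈ (tp hT a b).support := by
  obtain ⟨x, h1, h2, h3⟩ := exists_median hT hw hd a b c
  have e1 : d a x + d x b = d a b := between_of_mem hT hw hd h1
  have e2 : d a x + d x c = d a c := between_of_mem hT hw hd h2
  have e3 : d b x + d x c = d b c := between_of_mem hT hw hd h3
  have s1 : d x b = d b x := dist_symm hT hw hd x b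
  have s2 : d c b = d b c := dist_symm hT hw hd c b
  have hxc : d x c = 0 := by linarith
  have : x = c := (dist_eq_zero_iff hT hw hd).mp hxc
  rwa [this] at h1

/-- comparability on a path -/
lemma mem_tp_of_le {a b x y : V} (hx : x ∈ (tp hT a b).support)
    (hy : y ∈ (tp hT a b).support) (hle : d a x ≤ d a y) :
    x ∈ (tp hT a y).support := by
  have hsplit := (tp hT a b).take_spec hy
  rw [← hsplit, mem_support_append_iff] at hx
  rcases hx with hx | hx
  · rwa [takeUntil_eq_tp hT hw hd hy] at hx
  · rw [dropUntil_eq_tp hT hw hd hy] at hx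
    have h1 : d y x + d x b = d y b := between_of_mem hT hw hd hx
    have h2 : d a y + d y b = d a b := between_of_mem hT hw hd hy
    have hxab : x ∈ (tp hT a b).support := by
      rw [← hsplit, mem_support_append_iff]; right
      rw [dropUntil_eq_tp hT hw hd hy]; exact hx
    have h3 : d a x + d x b = d a b := between_of_mem hT hw hd hxab
    have hn : 0 ≤ d y x := dist_nonneg' hT hw hd y x
    have h4 : d y x = 0 := by linarith
    have : y = x := (dist_eq_zero_iff hT hw hd).mp h4
    rw [← this]; exact end_mem_support _
  
lemma tp_adj_support {a b : V} (h : G.Adj a b) :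
    (tp hT a b).support = [a, b] := by
  have : (Walk.cons h Walk.nil).IsPath := IsPath.nil.cons (by simp [h.ne])
  rw [← tp_unique hT _ this]; simp

lemma dist_adj {a b : V} (h : G.Adj a b) : d a b = w s(a, b) := by
  have hp : (Walk.cons h Walk.nil).IsPath := IsPath.nil.cons (by simp [h.ne])
  have := hd a b _ hp
  simpa using this

/-- no two distinct neighbors of `v` both lie on a path starting at `v` -/
lemma no_two_nbrs {v y x₁ x₂ : V} (h₁ : G.Adj v x₁) (h₂ : G.Adj v x₂) (hne : x₁ ≠ x₂)
    (m₁ : x₁ ∈ (tp hT v y).support) (m₂ : x₂ ∈ (tp hT v y).support) : False := by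
  have key : ∀ a b_ : V, G.Adj v a → G.Adj v b_ → a ≠ b_ →
      a ∈ (tp hT v y).support → b_ ∈ (tp hT v y).support → d v a ≤ d v b_ → False := by
    intro a b hva hvb hab ha hb hle
    have : a ∈ (tp hT v b).support := mem_tp_of_le hT hw hd ha hb hle
    rw [tp_adj_support hT hw hd hvb] at this
    simp only [List.mem_cons, List.mem_singleton] at this
    rcases this with rfl | this
    · exact hva.ne rfl
    · simp at this; exact hab this
  rcases le_total (d v x₁) (d v x₂) with hle | hle
  · exact key x₁ x₂ h₁ h₂ hne m₁ m₂ hle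
  · exact key x₂ x₁ h₂ h₁ (Ne.symm hne) m₂ m₁ hle


section Leaves

variable {L : Type*} {ι : L → V}
variable (hdeg1 : ∀ v : V, 1 ≤ G.degree v)
variable (hleaf : ∀ v : V, G.degree v = 1 ↔ v ∈ Set.range ι)

include hdeg1 hleaf

lemma extend_to_leaf : ∀ (n : ℕ) {u v : V} (q : G.Walk u v), q.IsPath →
    Fintype.card V - q.length ≤ n →
    ∃ (ℓ : L) (s : G.Walk v (ι ℓ)), (q.append s).IsPath := by
  intro n
  induction n with
  | zero =>
    intro u v q hq hb
    exfalso; have := hq.length_lt; omega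
  | succ n ih =>
    intro u v q hq hb
    by_cases hdv : G.degree v = 1
    · obtain ⟨ℓ, hℓ⟩ := (hleaf v).mp hdv
      subst hℓ
      exact ⟨ℓ, Walk.nil, by simpa using hq⟩
    · have h2 : 2 ≤ G.degree v := by have := hdeg1 v; omega
      have huniq : ∀ x₁ ∈ G.neighborFinset v ∩ q.support.toFinset,
          ∀ x₂ ∈ G.neighborFinset v ∩ q.support.toFinset, x₁ = x₂ := by
        intro x₁ hx₁ x₂ hx₂
        by_contra hne
        simp only [Finset.mem_inter, mem_neighborFinset, List.mem_toFinset] at hx₁ hx₂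
        have hq' : q.reverse = tp hT v u := tp_unique hT _ hq.reverse
        have m₁ : x₁ ∈ (tp hT v u).support := by
          rw [← hq', support_reverse, List.mem_reverse]; exact hx₁.2
        have m₂ : x₂ ∈ (tp hT v u).support := by
          rw [← hq', support_reverse, List.mem_reverse]; exact hx₂.2
        exact no_two_nbrs hT hw hd hx₁.1 hx₂.1 hne m₁ m₂
      have hcard : (G.neighborFinset v ∩ q.support.toFinset).card ≤ 1 :=
        Finset.card_le_one.mpr (fun a ha b hb => huniq a ha b hb)
      have hsd : (G.neighborFinset v \ q.support.toFinset).Nonempty := by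
        rw [← Finset.card_pos]
        have h3 := Finset.card_inter_add_card_sdiff (G.neighborFinset v) q.support.toFinset
        have h4 : (G.neighborFinset v).card = G.degree v := rfl
        omega
      obtain ⟨x, hx⟩ := hsd
      rw [Finset.mem_sdiff, mem_neighborFinset, List.mem_toFinset] at hx
      obtain ⟨hadj, hxs⟩ := hx
      have hq1 : (q.concat hadj).IsPath := isPath_concat hq hadj hxs
      have hb1 : Fintype.card V - (q.concat hadj).length ≤ n := by
        rw [length_concat]; omega
      obtain ⟨ℓ, s₁, hs₁⟩ := ih (q.concat hadj) hq1 hb1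
      refine ⟨ℓ, Walk.cons hadj s₁, ?_⟩
      rwa [concat_append] at hs₁

lemma leaf_beyond_mem (u v : V) :
    ∃ ℓ : L, v ∈ (tp hT u (ι ℓ)).support := by
  obtain ⟨ℓ, s, hs⟩ := extend_to_leaf hT hw hd hdeg1 hleaf (Fintype.card V)
    (tp hT u v) (tp_isPath hT u v) (by omega)
  refine ⟨ℓ, ?_⟩
  rw [← tp_unique hT _ hs, mem_support_append_iff]
  left; exact end_mem_support _

lemma leaf_beyond (u v : V) :
    ∃ ℓ : L, d u (ι ℓ) = d u v + d v (ι ℓ) := by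
  obtain ⟨ℓ, hm⟩ := leaf_beyond_mem hT hw hd hdeg1 hleaf u v
  exact ⟨ℓ, (between_of_mem hT hw hd hm).symm⟩

lemma three_dirs (v : V) (h3 : 3 ≤ G.degree v) :
    ∃ ℓ₁ ℓ₂ ℓ₃ : L,
      d (ι ℓ₁) v + d v (ι ℓ₂) = d (ι ℓ₁) (ι ℓ₂) ∧
      d (ι ℓ₁) v + d v (ι ℓ₃) = d (ι ℓ₁) (ι ℓ₃) ∧
      d (ι ℓ₂) v + d v (ι ℓ₃) = d (ι ℓ₂) (ι ℓ₃) := by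
  classical
  -- three distinct neighbors
  obtain ⟨x₁, hx₁⟩ := Finset.card_pos.mp (by
    rw [card_neighborFinset_eq_degree]; omega : 0 < (G.neighborFinset v).card)
  obtain ⟨x₂, hx₂⟩ := Finset.card_pos.mp (by
    have := Finset.card_erase_of_mem hx₁
    rw [this, card_neighborFinset_eq_degree]; omega
      : 0 < ((G.neighborFinset v).erase x₁).card)
  obtain ⟨x₃, hx₃⟩ := Finset.card_pos.mp (by
    have h1 := Finset.card_erase_of_mem hx₂
    have h2 := Finset.card_erase_of_mem hx₁
    rw [h1, h2, card_neighborFinset_eq_degree]; omega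
      : 0 < (((G.neighborFinset v).erase x₁).erase x₂).card)
  have hne12 : x₂ ≠ x₁ := (Finset.mem_erase.mp hx₂).1
  have hne13 : x₃ ≠ x₁ := (Finset.mem_erase.mp (Finset.mem_erase.mp hx₃).2).1
  have hne23 : x₃ ≠ x₂ := (Finset.mem_erase.mp hx₃).1
  have ha₁ : G.Adj v x₁ := (mem_neighborFinset _ _ _).mp hx₁
  have ha₂ : G.Adj v x₂ := (mem_neighborFinset _ _ _).mp (Finset.mem_erase.mp hx₂).2
  have ha₃ : G.Adj v x₃ := (mem_neighborFinset _ _ _).mp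
    (Finset.mem_erase.mp (Finset.mem_erase.mp hx₃).2).2
  -- for each neighbor, a leaf beyond it with the "reach" property
  have build : ∀ (x : V) (hvx : G.Adj v x), ∃ ℓ : L,
      (∀ y, y ∈ (tp hT v (ι ℓ)).support → y ≠ v → x ∈ (tp hT v y).support) := by
    intro x hvx
    have hq : (Walk.cons hvx (Walk.nil : G.Walk x x)).IsPath :=
      IsPath.nil.cons (by simp [hvx.ne])
    obtain ⟨ℓ, s, hs⟩ := extend_to_leaf hT hw hd hdeg1 hleaf (Fintype.card V)
      (Walk.cons hvx Walk.nil) hq (by omega)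
    have hPeq : (Walk.cons hvx Walk.nil).append s = tp hT v (ι ℓ) := tp_unique hT _ hs
    have hxmem : x ∈ (tp hT v (ι ℓ)).support := by
      rw [← hPeq, mem_support_append_iff]; left; simp
    have hseq : s = tp hT x (ι ℓ) := tp_unique hT _ (hs.of_append_right)
    refine ⟨ℓ, fun y hy hyv => ?_⟩
    have hy' : y ∈ (Walk.cons hvx (Walk.nil : G.Walk x x)).support ∨ y ∈ s.support := by
      rw [← mem_support_append_iff, hPeq]; exact hy
    have hys : y ∈ s.support := by
      rcases hy' with hy' | hy'
      · simp only [support_cons, support_nil, List.mem_cons, List.mem_singleton] at hy'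
        rcases hy' with rfl | rfl | h
        · exact absurd rfl hyv
        · rw [hseq]; exact start_mem_support _
        · cases h
      · exact hy'
    rw [hseq] at hys
    have b1 : d v x + d x (ι ℓ) = d v (ι ℓ) := between_of_mem hT hw hd hxmem
    have b2 : d v y + d y (ι ℓ) = d v (ι ℓ) := between_of_mem hT hw hd hy
    have b3 : d x y + d y (ι ℓ) = d x (ι ℓ) := between_of_mem hT hw hd hys
    have hle : d v x ≤ d v y := by
      have := dist_nonneg' hT hw hd x y; linarith
    exact mem_tp_of_le hT hw hd hxmem hy hle
  obtain ⟨ℓ₁, hr₁⟩ := build x₁ ha₁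
  obtain ⟨ℓ₂, hr₂⟩ := build x₂ ha₂
  obtain ⟨ℓ₃, hr₃⟩ := build x₃ ha₃
  have pair : ∀ (xa xb : V) (la lb : L), G.Adj v xa → G.Adj v xb → xa ≠ xb →
      (∀ y, y ∈ (tp hT v (ι la)).support → y ≠ v → xa ∈ (tp hT v y).support) →
      (∀ y, y ∈ (tp hT v (ι lb)).support → y ≠ v → xb ∈ (tp hT v y).support) →
      d (ι la) v + d v (ι lb) = d (ι la) (ι lb) := by
    intro xa xb la lb haa hab hnab hra hrb
    obtain ⟨x, hm1, hm2, hm3⟩ := exists_median hT hw hd (ι la) (ι lb) v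
    by_cases hxv : x = v
    · subst hxv; exact (between_of_mem hT hw hd hm1)
    · exfalso
      have h1 : x ∈ (tp hT v (ι la)).support := mem_tp_symm hT hw hd hm2
      have h2 : x ∈ (tp hT v (ι lb)).support := mem_tp_symm hT hw hd hm3
      exact no_two_nbrs hT hw hd haa hab hnab (hra x h1 hxv) (hrb x h2 hxv)
  exact ⟨ℓ₁, ℓ₂, ℓ₃,
    pair x₁ x₂ ℓ₁ ℓ₂ ha₁ ha₂ (Ne.symm hne12) hr₁ hr₂,
    pair x₁ x₃ ℓ₁ ℓ₃ ha₁ ha₃ (Ne.symm hne13) hr₁ hr₃,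
    pair x₂ x₃ ℓ₂ ℓ₃ ha₂ ha₃ (Ne.symm hne23) hr₂ hr₃⟩

end Leaves

end Metric

section Cross

variable {V V' L : Type*} [Fintype V] [DecidableEq V] [Fintype V'] [DecidableEq V']
variable {G : SimpleGraph V} {G' : SimpleGraph V'}
variable [DecidableRel G.Adj] [DecidableRel G'.Adj]
variable (hT : G.IsTree) (hT' : G'.IsTree)
variable {w : Sym2 V → ℝ} {d : V → V → ℝ} {w' : Sym2 V' → ℝ} {d' : V' → V' → ℝ}
variable (hw : ∀ e ∈ G.edgeSet, 0 < w e)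
variable (hd : ∀ (a b : V) (p : G.Walk a b), p.IsPath → d a b = (p.edges.map w).sum)
variable (hw' : ∀ e ∈ G'.edgeSet, 0 < w' e)
variable (hd' : ∀ (a b : V') (p : G'.Walk a b), p.IsPath → d' a b = (p.edges.map w').sum)
variable {ι : L → V} {ι' : L → V'}
variable (hagree : ∀ l₁ l₂ : L, d (ι l₁) (ι l₂) = d' (ι' l₁) (ι' l₂))

include hT hT' hw hd hw' hd' hagree

/-- transfer lemma: matching points on matching leaf geodesics have equal
distances to every leaf -/
lemma transfer {a b : L} {m : V} {v' : V'}
    (hm : d (ι a) m + d m (ι b) = d (ι a) (ι b))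
    (hv : d' (ι' a) v' + d' v' (ι' b) = d' (ι' a) (ι' b))
    (heq : d (ι a) m = d' (ι' a) v') :
    ∀ c : L, d m (ι c) = d' v' (ι' c) := by
  intro c
  obtain ⟨x, hx1, hx2, hx3⟩ := exists_median hT hw hd (ι a) (ι b) (ι c)
  obtain ⟨x', hx1', hx2', hx3'⟩ := exists_median hT' hw' hd' (ι' a) (ι' b) (ι' c)
  have e1 := between_of_mem hT hw hd hx1
  have e2 := between_of_mem hT hw hd hx2
  have e3 := between_of_mem hT hw hd hx3
  have e1' := between_of_mem hT' hw' hd' hx1'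
  have e2' := between_of_mem hT' hw' hd' hx2'
  have e3' := between_of_mem hT' hw' hd' hx3'
  have sxb := dist_symm hT hw hd x (ι b)
  have sbx := dist_symm hT hw hd (ι b) x
  have sxb' := dist_symm hT' hw' hd' x' (ι' b)
  have gp : d (ι a) x = d' (ι' a) x' := by
    have q1 := hagree a b
    have q2 := hagree a c
    have q3 := hagree b c
    linarith
  have hmem : m ∈ (tp hT (ι a) (ι b)).support := mem_of_between hT hw hd hm
  have hvmem : v' ∈ (tp hT' (ι' a) (ι' b)).support := mem_of_between hT' hw' hd' hv
  rcases le_total (d (ι a) m) (d (ι a) x) with hc | hc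
  · -- m between a and x, both sides
    have hmx : m ∈ (tp hT (ι a) x).support := mem_tp_of_le hT hw hd hmem hx1 hc
    have bmx := between_of_mem hT hw hd hmx
    have t1 := dist_triangle' hT hw hd (ι a) (ι c) m
    have t2 := dist_triangle' hT hw hd m (ι c) x
    have hdm : d m (ι c) = d (ι a) (ι c) - d (ι a) m := by linarith
    have hc' : d' (ι' a) v' ≤ d' (ι' a) x' := by rw [← heq, ← gp]; exact hc
    have hmx' : v' ∈ (tp hT' (ι' a) x').support := mem_tp_of_le hT' hw' hd' hvmem hx1' hc'
    have bmx' := between_of_mem hT' hw' hd' hmx'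
    have t1' := dist_triangle' hT' hw' hd' (ι' a) (ι' c) v'
    have t2' := dist_triangle' hT' hw' hd' v' (ι' c) x'
    have hdm' : d' v' (ι' c) = d' (ι' a) (ι' c) - d' (ι' a) v' := by linarith
    rw [hdm, hdm', hagree a c, heq]
  · -- x between a and m
    have sba := dist_symm hT hw hd (ι b) (ι a)
    have hBm : d (ι b) m ≤ d (ι b) x := by
      have s1 := dist_symm hT hw hd m (ι b)
      linarith
    have hmB : m ∈ (tp hT (ι b) (ι a)).support := mem_tp_symm hT hw hd hmem
    have hxB : x ∈ (tp hT (ι b) (ι a)).support := mem_tp_symm hT hw hd hx1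
    have hmx : m ∈ (tp hT (ι b) x).support := mem_tp_of_le hT hw hd hmB hxB hBm
    have bmx := between_of_mem hT hw hd hmx
    have t1 := dist_triangle' hT hw hd (ι b) (ι c) m
    have t2 := dist_triangle' hT hw hd m (ι c) x
    have sbc := dist_symm hT hw hd (ι b) (ι c)
    have smb := dist_symm hT hw hd m (ι b)
    have hdm : d m (ι c) = d (ι a) m + d (ι a) (ι c) - 2 * d (ι a) x := by linarith
    -- primed side
    have sba' := dist_symm hT' hw' hd' (ι' b) (ι' a)
    have hc2 : d' (ι' a) x' ≤ d' (ι' a) v' := by rw [← heq, ← gp]; exact hc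
    have hBm' : d' (ι' b) v' ≤ d' (ι' b) x' := by
      have s1 := dist_symm hT' hw' hd' v' (ι' b)
      linarith
    have hmB' : v' ∈ (tp hT' (ι' b) (ι' a)).support := mem_tp_symm hT' hw' hd' hvmem
    have hxB' : x' ∈ (tp hT' (ι' b) (ι' a)).support := mem_tp_symm hT' hw' hd' hx1'
    have hmx' : v' ∈ (tp hT' (ι' b) x').support := mem_tp_of_le hT' hw' hd' hmB' hxB' hBm'
    have bmx' := between_of_mem hT' hw' hd' hmx'
    have t1' := dist_triangle' hT' hw' hd' (ι' b) (ι' c) v'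
    have t2' := dist_triangle' hT' hw' hd' v' (ι' c) x'
    have sbc' := dist_symm hT' hw' hd' (ι' b) (ι' c)
    have smb' := dist_symm hT' hw' hd' v' (ι' b)
    have hdm' : d' v' (ι' c) = d' (ι' a) v' + d' (ι' a) (ι' c) - 2 * d' (ι' a) x' := by
      linarith
    rw [hdm, hdm', hagree a c, heq, gp]

/-- every vertex of `G'` has a metric twin in `G` -/
lemma claim2
    (hdeg1' : ∀ v : V', 1 ≤ G'.degree v)
    (hleaf' : ∀ v : V', G'.degree v = 1 ↔ v ∈ Set.range ι')
    (hdeg' : ∀ v : V', 2 ≤ G'.degree v → 3 ≤ G'.degree v) :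
    ∀ v' : V', ∃ v : V, ∀ l : L, d v (ι l) = d' v' (ι' l) := by
  intro v'
  by_cases h1 : G'.degree v' = 1
  · obtain ⟨l, hl⟩ := (hleaf' v').mp h1
    refine ⟨ι l, fun c => ?_⟩
    rw [← hl, hagree l c]
  · have h3 : 3 ≤ G'.degree v' := by
      have := hdeg1' v'
      have := hdeg' v'
      omega
    obtain ⟨l₁, l₂, l₃, p12, p13, p23⟩ :=
      three_dirs hT' hw' hd' hdeg1' hleaf' v' (by omega)
    obtain ⟨x, hx1, hx2, hx3⟩ := exists_median hT hw hd (ι l₁) (ι l₂) (ι l₃)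
    have e1 := between_of_mem hT hw hd hx1
    have e2 := between_of_mem hT hw hd hx2
    have e3 := between_of_mem hT hw hd hx3
    have sxb := dist_symm hT hw hd x (ι l₂)
    have s12' := dist_symm hT' hw' hd' (ι' l₁) v'
    have s22' := dist_symm hT' hw' hd' (ι' l₂) v'
    have heq : d (ι l₁) x = d' (ι' l₁) v' := by
      have q1 := hagree l₁ l₂
      have q2 := hagree l₁ l₃
      have q3 := hagree l₂ l₃
      linarith
    refine ⟨x, ?_⟩
    exact transfer hT hT' hw hd hw' hd' hagree (a := l₁) (b := l₂) e1 p12 heq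

lemma adj_push (α : V → V') (β : V' → V) (hβα : ∀ x, α (β x) = x)
    (hdp : ∀ u v : V, d u v = d' (α u) (α v)) {u v : V} (huv : G.Adj u v) :
    G'.Adj (α u) (α v) := by
  have hne : u ≠ v := huv.ne
  have hpos : 0 < d u v := dist_pos hT hw hd hne
  have hne' : α u ≠ α v := by
    intro h
    rw [hdp u v, h, dist_self hT' hw' hd' (α v)] at hpos
    exact lt_irrefl _ hpos
  set P := tp hT' (α u) (α v) with hP
  have hsupp : ∀ c', c' ∈ P.support → c' = α u ∨ c' = α v := by
    intro c' hc'
    have hb' := between_of_mem hT' hw' hd' hc'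
    have hc'' : d u (β c') + d (β c') v = d u v := by
      rw [hdp u (β c'), hdp (β c') v, hdp u v, hβα c']
      exact hb'
    have hmem := mem_of_between hT hw hd hc''
    rw [tp_adj_support hT hw hd huv] at hmem
    simp only [List.mem_cons, List.not_mem_nil, or_false] at hmem
    rcases hmem with h | h
    · left; rw [← hβα c', h]
    · right; rw [← hβα c', h]
  have hnil : ¬ P.Nil := not_nil_of_ne hne'
  have hlen : 0 < P.length := not_nil_iff_lt_length.mp hnil
  have hy : P.getVert 1 ∈ P.support := mem_support_iff_exists_getVert.mpr ⟨1, rfl, hlen⟩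
  have hadj : G'.Adj (α u) (P.getVert 1) := adj_snd hnil
  rcases hsupp _ hy with h | h
  · rw [h] at hadj; exact absurd hadj (G'.loopless.irrefl _)
  · rwa [h] at hadj

end Cross

lemma card_one {W : Type*} [Fintype W] [DecidableEq W] {H : SimpleGraph W}
    [DecidableRel H.Adj] {L : Type*} (hE : IsEmpty L) (κ : L → W)
    (hHT : H.IsTree) (hHleaf : ∀ v : W, H.degree v = 1 ↔ v ∈ Set.range κ) :
    Fintype.card W = 1 := by
  have hne : Nonempty W := hHT.isConnected.nonempty
  have hpos : 0 < Fintype.card W := Fintype.card_pos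
  by_contra h
  have h2 : 2 ≤ Fintype.card W := by omega
  have noleaf : ∀ v : W, H.degree v ≠ 1 := by
    intro v hv
    obtain ⟨l, -⟩ := (hHleaf v).mp hv
    exact hE.elim l
  have hmin : ∀ v : W, 1 ≤ H.degree v := by
    intro v
    obtain ⟨u, hu⟩ := Fintype.exists_ne_of_one_lt_card (by omega) v
    have hnil : ¬ (tp hHT v u).Nil := SimpleGraph.Walk.not_nil_of_ne (Ne.symm hu)
    have hadj := SimpleGraph.Walk.adj_snd hnil
    have := H.degree_pos_iff_exists_adj v |>.mpr ⟨_, hadj⟩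
    omega
  have hall : ∀ v : W, 2 ≤ H.degree v := by
    intro v
    have := hmin v
    have := noleaf v
    omega
  have hsum := H.sum_degrees_eq_twice_card_edges
  have hedge := hHT.card_edgeFinset
  have hs2 : 2 * Fintype.card W ≤ ∑ v, H.degree v := by
    calc 2 * Fintype.card W = ∑ _v : W, 2 := by
          rw [Finset.sum_const, Finset.card_univ, smul_eq_mul, mul_comm]
    _ ≤ ∑ v, H.degree v := Finset.sum_le_sum (fun i _ => hall i)
  omega


end Stmt13Aux


open Stmt13Aux in
/-- Two positively edge-weighted finite trees whose leaf sets are identified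
with a common set `L`, all of whose internal vertices have degree ≥ 3, and
whose weighted leaf-to-leaf distances agree, are isomorphic via a
weight-preserving isomorphism fixing `L`. -/
theorem stmt13 {V V' L : Type*} [Fintype V] [Fintype V']
    [DecidableEq V] [DecidableEq V']
    (G : SimpleGraph V) (G' : SimpleGraph V')
    [DecidableRel G.Adj] [DecidableRel G'.Adj]
    (hT : G.IsTree) (hT' : G'.IsTree)
    (w : Sym2 V → ℝ) (w' : Sym2 V' → ℝ)
    (hw : ∀ e ∈ G.edgeSet, 0 < w e) (hw' : ∀ e ∈ G'.edgeSet, 0 < w' e)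
    (ι : L → V) (ι' : L → V')
    (hι : Function.Injective ι) (hι' : Function.Injective ι')
    (hleaf : ∀ v : V, G.degree v = 1 ↔ v ∈ Set.range ι)
    (hleaf' : ∀ v : V', G'.degree v = 1 ↔ v ∈ Set.range ι')
    (hdeg : ∀ v : V, 2 ≤ G.degree v → 3 ≤ G.degree v)
    (hdeg' : ∀ v : V', 2 ≤ G'.degree v → 3 ≤ G'.degree v)
    (d : V → V → ℝ) (d' : V' → V' → ℝ)
    (hd : ∀ (a b : V) (p : G.Walk a b), p.IsPath → d a b = (p.edges.map w).sum)
    (hd' : ∀ (a b : V') (p : G'.Walk a b), p.IsPath →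
      d' a b = (p.edges.map w').sum)
    (hagree : ∀ l₁ l₂ : L, d (ι l₁) (ι l₂) = d' (ι' l₁) (ι' l₂)) :
    ∃ φ : G ≃g G', (∀ l : L, φ (ι l) = ι' l) ∧
      ∀ a b : V, G.Adj a b → w s(a, b) = w' s(φ a, φ b) := by
  classical
  by_cases hL : Nonempty L
  · -- main case
    have hdeg1 : ∀ v : V, 1 ≤ G.degree v := by
      intro v
      obtain ⟨l₀⟩ := hL
      by_cases hv : v = ι l₀
      · subst hv; rw [(hleaf _).mpr ⟨l₀, rfl⟩]
      · have hnil : ¬ (tp hT v (ι l₀)).Nil := SimpleGraph.Walk.not_nil_of_ne hv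
        have hadj := SimpleGraph.Walk.adj_snd hnil
        have := G.degree_pos_iff_exists_adj v |>.mpr ⟨_, hadj⟩
        omega
    have hdeg1' : ∀ v : V', 1 ≤ G'.degree v := by
      intro v
      obtain ⟨l₀⟩ := hL
      by_cases hv : v = ι' l₀
      · subst hv; rw [(hleaf' _).mpr ⟨l₀, rfl⟩]
      · have hnil : ¬ (tp hT' v (ι' l₀)).Nil := SimpleGraph.Walk.not_nil_of_ne hv
        have hadj := SimpleGraph.Walk.adj_snd hnil
        have := G'.degree_pos_iff_exists_adj v |>.mpr ⟨_, hadj⟩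
        omega
    have hagree' : ∀ l₁ l₂ : L, d' (ι' l₁) (ι' l₂) = d (ι l₁) (ι l₂) :=
      fun l₁ l₂ => (hagree l₁ l₂).symm
    have inj : ∀ u v : V, (∀ l : L, d u (ι l) = d v (ι l)) → u = v := by
      intro u v h
      obtain ⟨ℓ, hℓ⟩ := leaf_beyond hT hw hd hdeg1 hleaf u v
      have h0 := h ℓ
      have hn : d u v = 0 := by linarith
      exact (dist_eq_zero_iff hT hw hd).mp hn
    have inj' : ∀ u v : V', (∀ l : L, d' u (ι' l) = d' v (ι' l)) → u = v := by
      intro u v h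
      obtain ⟨ℓ, hℓ⟩ := leaf_beyond hT' hw' hd' hdeg1' hleaf' u v
      have h0 := h ℓ
      have hn : d' u v = 0 := by linarith
      exact (dist_eq_zero_iff hT' hw' hd').mp hn
    choose ψ hψ using claim2 hT hT' hw hd hw' hd' hagree hdeg1' hleaf' hdeg'
    choose ψ' hψ' using claim2 hT' hT hw' hd' hw hd hagree' hdeg1 hleaf hdeg
    have hLeft : ∀ v : V, ψ (ψ' v) = v := by
      intro v
      apply inj
      intro l
      rw [hψ (ψ' v) l, hψ' v l]
    have hRight : ∀ v' : V', ψ' (ψ v') = v' := by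
      intro v'
      apply inj'
      intro l
      rw [hψ' (ψ v') l, hψ v' l]
    have dpres : ∀ u v : V, d u v = d' (ψ' u) (ψ' v) := by
      intro u v
      apply le_antisymm
      · obtain ⟨ℓ, hℓ⟩ := leaf_beyond hT hw hd hdeg1 hleaf u v
        have t := dist_triangle' hT' hw' hd' (ψ' u) (ι' ℓ) (ψ' v)
        have h1 := hψ' u ℓ
        have h2 := hψ' v ℓ
        linarith
      · obtain ⟨ℓ, hℓ⟩ := leaf_beyond hT' hw' hd' hdeg1' hleaf' (ψ' u) (ψ' v)
        have t := dist_triangle' hT hw hd u (ι ℓ) v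
        have h1 := hψ' u ℓ
        have h2 := hψ' v ℓ
        linarith
    have dpres' : ∀ u' v' : V', d' u' v' = d (ψ u') (ψ v') := by
      intro u' v'
      have h := dpres (ψ u') (ψ v')
      rw [hRight u', hRight v'] at h
      exact h.symm
    have adjfwd : ∀ u v : V, G.Adj u v → G'.Adj (ψ' u) (ψ' v) := fun u v huv =>
      adj_push hT hT' hw hd hw' hd' hagree ψ' ψ hRight dpres huv
    have adjbwd : ∀ u' v' : V', G'.Adj u' v' → G.Adj (ψ u') (ψ v') := fun u' v' huv =>
      adj_push hT' hT hw' hd' hw hd hagree' ψ ψ' hLeft dpres' huv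
    refine ⟨⟨⟨ψ', ψ, hLeft, hRight⟩, ?_⟩, ?_, ?_⟩
    · intro a b
      show G'.Adj (ψ' a) (ψ' b) ↔ G.Adj a b
      constructor
      · intro h
        have := adjbwd _ _ h
        rwa [hLeft, hLeft] at this
      · intro h
        exact adjfwd a b h
    · intro l
      show ψ' (ι l) = ι' l
      apply inj'
      intro l'
      rw [hψ' (ι l) l', hagree l l']
    · intro a b hab
      show w s(a, b) = w' s(ψ' a, ψ' b)
      have h1 : d a b = w s(a, b) := dist_adj hT hw hd hab
      have h2 : G'.Adj (ψ' a) (ψ' b) := adjfwd a b hab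
      have h3 : d' (ψ' a) (ψ' b) = w' s(ψ' a, ψ' b) := dist_adj hT' hw' hd' h2
      rw [← h1, dpres a b, h3]
  · -- degenerate case : no leaves, both trees are single points
    have hE : IsEmpty L := not_nonempty_iff.mp hL
    have hcV : Fintype.card V = 1 := card_one hE ι hT hleaf
    have hcV' : Fintype.card V' = 1 := card_one hE ι' hT' hleaf'
    have hsub : Subsingleton V := Fintype.card_le_one_iff_subsingleton.mp (by omega)
    have hsub' : Subsingleton V' := Fintype.card_le_one_iff_subsingleton.mp (by omega)
    have noadj : ∀ a b : V, ¬ G.Adj a b := by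
      intro a b h
      have : a = b := Subsingleton.elim a b
      rw [this] at h
      exact G.loopless.irrefl b h
    have noadj' : ∀ a b : V', ¬ G'.Adj a b := by
      intro a b h
      have : a = b := Subsingleton.elim a b
      rw [this] at h
      exact G'.loopless.irrefl b h
    refine ⟨⟨Fintype.equivOfCardEq (hcV.trans hcV'.symm), ?_⟩, ?_, ?_⟩
    · intro a b
      constructor
      · intro h; exact absurd h (noadj' _ _)
      · intro h; exact absurd h (noadj _ _)
    · intro l; exact (hE.elim l)
    · intro a b hab; exact absurd hab (noadj _ _)
end

section
/- In a tree with root t and positive edge resistances r, for non-root nodes a, b: H⁻¹(a,b) = ( d(a,t) + d(b,t) − d(a,b) ) / 2, where H is the reduced Laplacian with weights 1/r and d is the weighted path distance with weights r. -/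
open SimpleGraph

/-- In a tree with root `t` and positive edge resistances `r`, for non-root
nodes `a`, `b`: `H⁻¹ a b = (d a t + d b t - d a b) / 2`, where `H` is the
reduced Laplacian with weights `1/r` and `d` the weighted path distance. -/
theorem stmt19 {V : Type*} [Fintype V] [DecidableEq V]
    (G : SimpleGraph V) [DecidableRel G.Adj] (hT : G.IsTree)
    (t : V) (r : Sym2 V → ℝ) (hr : ∀ e ∈ G.edgeSet, 0 < r e)
    (d : V → V → ℝ)
    (hd : ∀ (a b : V) (p : G.Walk a b), p.IsPath → d a b = (p.edges.map r).sum)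
    (L : Matrix V V ℝ)
    (hL : ∀ a b : V, L a b =
      if a = b then ∑ c ∈ G.neighborFinset a, (r s(a, c))⁻¹
      else if G.Adj a b then -(r s(a, b))⁻¹ else 0)
    (H : Matrix {v : V // v ≠ t} {v : V // v ≠ t} ℝ)
    (hH : ∀ a b : {v : V // v ≠ t}, H a b = L a.1 b.1) :
    ∀ a b : {v : V // v ≠ t},
      H⁻¹ a b = (d a.1 t + d b.1 t - d a.1 b.1) / 2 := by
  classical
  have hex : ∀ v w : V, ∃! p : G.Walk v w, p.IsPath := hT.existsUnique_path
  have hd0 : ∀ v, d v v = 0 := by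
    intro v
    simpa using hd v v Walk.nil Walk.IsPath.nil
  have hdsymm : ∀ v w, d v w = d w v := by
    intro v w
    obtain ⟨p, hp, -⟩ := hex v w
    rw [hd v w p hp, hd w v p.reverse hp.reverse, Walk.edges_reverse, List.map_reverse,
      List.sum_reverse]
  have hrne : ∀ {u v : V}, G.Adj u v → r s(u, v) ≠ 0 := by
    intro u v h
    exact (hr _ (G.mem_edgeSet.mpr h)).ne'
  have hdedge : ∀ {u v : V}, G.Adj u v → d u v = r s(u, v) := by
    intro u v h
    have hp : (Walk.cons h (Walk.nil)).IsPath := by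
      simp [Walk.cons_isPath_iff, h.ne]
    simpa using hd u v (Walk.cons h Walk.nil) hp
  -- Lemma A: if u ∉ path from v to x, then d u x = r + d v x
  have lemA : ∀ {u v : V} (h : G.Adj u v) (x : V) (q : G.Walk v x),
      q.IsPath → u ∉ q.support → d u x = r s(u, v) + d v x := by
    intro u v h x q hq hu
    have hp : (Walk.cons h q).IsPath := hq.cons hu
    rw [hd u x (Walk.cons h q) hp, hd v x q hq]
    simp
  -- Lemma B: if u ∈ path from v to x (u adj v), then d v x = r + d u x
  have lemB : ∀ {u v : V} (h : G.Adj u v) (x : V) (q : G.Walk v x),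
      q.IsPath → u ∈ q.support → d v x = r s(u, v) + d u x := by
    intro u v h x q hq hu
    have hspec := q.take_spec hu
    have h1 : (q.takeUntil u hu).IsPath := hq.takeUntil hu
    have h2 : (q.dropUntil u hu).IsPath := hq.dropUntil hu
    have hsingle : (Walk.cons h.symm Walk.nil : G.Walk v u).IsPath := by
      simp [Walk.cons_isPath_iff, h.symm.ne]
    have heq : q.takeUntil u hu = Walk.cons h.symm Walk.nil :=
      (hex v u).unique h1 hsingle
    have : q.edges = (q.takeUntil u hu).edges ++ (q.dropUntil u hu).edges := by
      rw [← Walk.edges_append, hspec]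
    rw [hd v x q hq, this, heq, hd u x (q.dropUntil u hu) h2]
    simp [Sym2.eq_swap]
  -- second vertex of the path from a to x, for x ≠ a
  have hsecond : ∀ a x : V, x ≠ a → ∃ c : V, G.Adj a c ∧ d a x = r s(a, c) + d c x ∧
      ∀ c' : V, G.Adj a c' → c' ≠ c → d c' x = r s(a, c') + d a x := by
    intro a x hxa
    obtain ⟨p, hp, hup⟩ := hex a x
    cases p with
    | nil => exact absurd rfl hxa.symm
    | @cons _ c _ h q =>
      rw [Walk.cons_isPath_iff] at hp
      refine ⟨c, h, lemA h x q hp.1 hp.2, ?_⟩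
      intro c' h' hne
      obtain ⟨q', hq', -⟩ := hex c' x
      by_cases ha : a ∈ q'.support
      · exact lemB h' x q' hq' ha
      · exfalso
        have hcons : (Walk.cons h' q').IsPath := hq'.cons ha
        have := hup (Walk.cons h' q') hcons
        have hgv : (Walk.cons h' q').getVert 1 = (Walk.cons h q).getVert 1 := by
          rw [this]
        simp [Walk.getVert_cons _ _ one_ne_zero] at hgv
        exact hne hgv
  -- the key sum over neighbors
  have keySum : ∀ a x : V, ∑ c ∈ G.neighborFinset a, (d a x - d c x) / (2 * r s(a, c)) =
      (if x = a then 0 else 1) - (G.degree a : ℝ) / 2 := by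
    intro a x
    by_cases hxa : x = a
    · subst hxa
      have : ∀ c ∈ G.neighborFinset x, (d x x - d c x) / (2 * r s(x, c)) = -(1 / 2) := by
        intro c hc
        rw [mem_neighborFinset] at hc
        rw [hd0, hdsymm c x, hdedge hc]
        have := hrne hc
        field_simp
        ring
      rw [Finset.sum_congr rfl this]
      simp [Finset.sum_const, SimpleGraph.card_neighborFinset_eq_degree]
      ring
    · obtain ⟨c₀, hc₀adj, hc₀d, hc₀u⟩ := hsecond a x hxa
      have : ∀ c ∈ G.neighborFinset a, (d a x - d c x) / (2 * r s(a, c)) =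
          (if c = c₀ then (1 : ℝ) else 0) - 1 / 2 := by
        intro c hc
        rw [mem_neighborFinset] at hc
        by_cases h : c = c₀
        · subst h
          rw [hc₀d]
          have := hrne hc
          rw [if_pos rfl]
          field_simp
          ring
        · rw [hc₀u c hc h]
          have := hrne hc
          rw [if_neg h]
          field_simp
          ring
      rw [Finset.sum_congr rfl this, Finset.sum_sub_distrib,
        Finset.sum_ite_eq' (G.neighborFinset a) c₀ (fun _ => (1 : ℝ)),
        if_pos ((G.mem_neighborFinset a c₀).mpr hc₀adj), if_neg hxa]
      simp [Finset.sum_const, SimpleGraph.card_neighborFinset_eq_degree]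
      ring
  -- main matrix computation
  set M : Matrix {v : V // v ≠ t} {v : V // v ≠ t} ℝ :=
    fun a b => (d a.1 t + d b.1 t - d a.1 b.1) / 2 with hM
  have hright : H * M = 1 := by
    ext a b
    rw [Matrix.mul_apply, Matrix.one_apply]
    set f : V → ℝ := fun c => (d c t + d b.1 t - d c b.1) / 2 with hf
    have hstep1 : ∑ c : {v : V // v ≠ t}, H a c * M c b =
        ∑ c ∈ Finset.univ.erase t, L a.1 c * f c := by
      rw [Finset.sum_subtype (p := fun v => v ≠ t) (Finset.univ.erase t)
        (fun x => by simp [Finset.mem_erase]) (fun c => L a.1 c * f c)]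
      exact Finset.sum_congr rfl fun c _ => by rw [hH, hM, hf]
    have hft : f t = 0 := by
      rw [hf]
      simp [hd0, hdsymm b.1 t]
    have hstep2 : ∑ c ∈ Finset.univ.erase t, L a.1 c * f c =
        ∑ c : V, L a.1 c * f c := by
      apply Finset.sum_erase
      rw [hft, mul_zero]
    have hdiag : L a.1 a.1 = ∑ c ∈ G.neighborFinset a.1, (r s(a.1, c))⁻¹ := by
      rw [hL]; simp
    have hsplit : ∑ c : V, L a.1 c * f c =
        L a.1 a.1 * f a.1 + ∑ c ∈ Finset.univ.erase a.1, L a.1 c * f c := by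
      exact (Finset.add_sum_erase _ (fun c => L a.1 c * f c) (Finset.mem_univ a.1)).symm
    have hoff : ∑ c ∈ Finset.univ.erase a.1, L a.1 c * f c =
        ∑ c ∈ G.neighborFinset a.1, -(r s(a.1, c))⁻¹ * f c := by
      have h1 : ∀ c ∈ Finset.univ.erase a.1, L a.1 c * f c =
          if G.Adj a.1 c then -(r s(a.1, c))⁻¹ * f c else 0 := by
        intro c hc
        rw [Finset.mem_erase] at hc
        rw [hL, if_neg (fun h => hc.1 h.symm)]
        split <;> simp
      rw [Finset.sum_congr rfl h1, Finset.sum_erase _ (by simp),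
        ← Finset.sum_filter, SimpleGraph.neighborFinset_eq_filter]
    rw [hstep1, hstep2, hsplit, hoff, hdiag, Finset.sum_mul, ← Finset.sum_add_distrib]
    have hterm : ∀ c ∈ G.neighborFinset a.1,
        (r s(a.1, c))⁻¹ * f a.1 + -(r s(a.1, c))⁻¹ * f c =
        (d a.1 t - d c t) / (2 * r s(a.1, c)) - (d a.1 b.1 - d c b.1) / (2 * r s(a.1, c)) := by
      intro c hc
      rw [mem_neighborFinset] at hc
      have := hrne hc
      rw [hf]
      field_simp
      ring
    rw [Finset.sum_congr rfl hterm, Finset.sum_sub_distrib, keySum, keySum,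
      if_neg (fun h => a.2 h.symm)]
    by_cases hab : a = b
    · subst hab
      rw [if_pos rfl, if_pos rfl]
      ring
    · rw [if_neg (fun h : (b : V) = a.1 => hab (Subtype.ext h.symm)), if_neg hab]
      ring
  intro a b
  rw [Matrix.inv_eq_right_inv hright]
end
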